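/- Let ψ : ℝ → ℝ satisfy ψ(x) = 0 whenever |x| ≥ 2. Then for every μ > 0 and every y ∈ (0,1), the series ∑_{n=1}^∞ n·sin(nπy)·(1 − ψ(n² + μ))/(n² + μ) converges (in the sense that its partial sums converge) and its sum equals (π/2)·sinh(π√μ·(1 − y))/sinh(π√μ) − sin(πy)·ψ(1 + μ)/(1 + μ). -/

import Mathlib

open Real Filter

lemma sumu {p : ℕ} (hp : 1 < p) : Summable (fun n : ℕ => 1/((n:ℝ)+1)^p) := by
  have h := Real.summable_one_div_nat_pow.mpr hp
  have h2 := (summable_nat_add_iff (f := fun n : ℕ => 1/(n:ℝ)^p) 1).2 h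
  exact h2.congr fun n => by push_cast; ring

lemma hasDerivAt_sinm (c t : ℝ) :
    HasDerivAt (fun u : ℝ => Real.sin (c*u)) (c * Real.cos (c*t)) t := by
  exact ((Real.hasDerivAt_sin (c*t)).comp t ((hasDerivAt_id t).const_mul c)).congr_deriv (by ring)

lemma hasDerivAt_cosm (c t : ℝ) :
    HasDerivAt (fun u : ℝ => Real.cos (c*u)) (-(c * Real.sin (c*t))) t := by
  have := (Real.hasDerivAt_cos (c*t)).comp t ((hasDerivAt_id t).const_mul c)
  refine this.congr_deriv ?_
  simp; ring

lemma C2_eval {t : ℝ} (h0 : 0 ≤ t) (h2 : t ≤ 2*π) :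
    (∑' n : ℕ, Real.cos (((n:ℝ)+1) * t) / ((n:ℝ)+1)^2) = π^2/6 - π*t/2 + t^2/4 := by
  have hpi := Real.pi_pos
  have hmem : t/(2*π) ∈ Set.Icc (0:ℝ) 1 :=
    ⟨div_nonneg h0 (by positivity), (div_le_one (by positivity)).mpr h2⟩
  have hs := hasSum_one_div_nat_pow_mul_cos (k := 1) one_ne_zero hmem
  have hfe : (fun n : ℕ => 1/(n:ℝ)^(2*1) * Real.cos (2*π*(n:ℝ)*(t/(2*π))))
      = fun n : ℕ => Real.cos ((n:ℝ)*t)/(n:ℝ)^2 := by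
    funext n
    rw [show 2*π*(n:ℝ)*(t/(2*π)) = (n:ℝ)*t by field_simp]
    ring
  rw [hfe] at hs
  set V := ((-1:ℝ)) ^ (1 + 1) * (2 * π) ^ (2 * 1) / 2 / (2 * 1).factorial *
      Polynomial.eval (t/(2*π)) (Polynomial.map (algebraMap ℚ ℝ) (Polynomial.bernoulli (2 * 1)))
    with hV
  have hshift := (hasSum_nat_add_iff' (f := fun n : ℕ => Real.cos ((n:ℝ)*t)/(n:ℝ)^2) 1).2 hs
  have h00 : ∑ i ∈ Finset.range 1, Real.cos ((i:ℝ)*t)/(i:ℝ)^2 = 0 := by simp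
  rw [h00, sub_zero] at hshift
  have htsum : (∑' n : ℕ, Real.cos (((n:ℝ)+1) * t) / ((n:ℝ)+1)^2) = V := by
    rw [← hshift.tsum_eq]
    exact tsum_congr fun n => by push_cast; ring_nf
  rw [htsum, hV]
  have hB : Polynomial.eval (t/(2*π)) (Polynomial.map (algebraMap ℚ ℝ) (Polynomial.bernoulli 2))
      = (t/(2*π))^2 - (t/(2*π)) + 1/6 := by
    have hb2 : _root_.bernoulli 2 = 1/6 := by
      rw [bernoulli_eq_bernoulli'_of_ne_one (by norm_num), bernoulli'_two]
    simp [Polynomial.bernoulli, Finset.sum_range_succ, hb2]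
    ring
  norm_num [hB, Nat.factorial]
  field_simp
  ring

noncomputable def Tser (a t : ℝ) : ℝ :=
  ∑' n : ℕ, Real.sin (((n:ℝ)+1) * t) / (((n:ℝ)+1) * (((n:ℝ)+1)^2 + a^2))

noncomputable def Gser (a t : ℝ) : ℝ :=
  ∑' n : ℕ, Real.cos (((n:ℝ)+1) * t) / (((n:ℝ)+1)^2 + a^2)

noncomputable def Hser (a t : ℝ) : ℝ :=
  ∑' n : ℕ, Real.cos (((n:ℝ)+1) * t) / (((n:ℝ)+1)^2 * (((n:ℝ)+1)^2 + a^2))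

section ser
variable {a : ℝ} (ha : 0 < a)

lemma Tser_term_bound (t : ℝ) (n : ℕ) :
    ‖Real.sin (((n:ℝ)+1) * t) / (((n:ℝ)+1) * (((n:ℝ)+1)^2 + a^2))‖ ≤ 1/((n:ℝ)+1)^3 := by
  have hc : (0:ℝ) < (n:ℝ)+1 := by positivity
  have hd : (0:ℝ) < ((n:ℝ)+1) * (((n:ℝ)+1)^2 + a^2) := by positivity
  rw [Real.norm_eq_abs, abs_div, abs_of_pos hd]
  apply div_le_div₀ zero_le_one (Real.abs_sin_le_one _) (by positivity)
  nlinarith [sq_nonneg a, sq_nonneg ((n:ℝ)+1)]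

lemma Gser_term_bound (t : ℝ) (n : ℕ) :
    ‖Real.cos (((n:ℝ)+1) * t) / (((n:ℝ)+1)^2 + a^2)‖ ≤ 1/((n:ℝ)+1)^2 := by
  have hc : (0:ℝ) < (n:ℝ)+1 := by positivity
  have hd : (0:ℝ) < ((n:ℝ)+1)^2 + a^2 := by positivity
  rw [Real.norm_eq_abs, abs_div, abs_of_pos hd]
  apply div_le_div₀ zero_le_one (Real.abs_cos_le_one _) (by positivity)
  nlinarith [sq_nonneg a]

lemma Hser_term_bound (t : ℝ) (n : ℕ) :
    ‖Real.cos (((n:ℝ)+1) * t) / (((n:ℝ)+1)^2 * (((n:ℝ)+1)^2 + a^2))‖ ≤ 1/((n:ℝ)+1)^2 := by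
  have hc : (0:ℝ) < (n:ℝ)+1 := by positivity
  have hd : (0:ℝ) < ((n:ℝ)+1)^2 * (((n:ℝ)+1)^2 + a^2) := by positivity
  rw [Real.norm_eq_abs, abs_div, abs_of_pos hd]
  apply div_le_div₀ zero_le_one (Real.abs_cos_le_one _) (by positivity)
  nlinarith [sq_nonneg a, sq_nonneg ((n:ℝ)+1), sq_nonneg (((n:ℝ)+1)^2 - 1)]

include ha

lemma Tser_summable (t : ℝ) :
    Summable (fun n : ℕ => Real.sin (((n:ℝ)+1) * t) / (((n:ℝ)+1) * (((n:ℝ)+1)^2 + a^2))) :=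
  Summable.of_norm_bounded (sumu (by norm_num)) (Tser_term_bound (a := a) t)

lemma Gser_summable (t : ℝ) :
    Summable (fun n : ℕ => Real.cos (((n:ℝ)+1) * t) / (((n:ℝ)+1)^2 + a^2)) :=
  Summable.of_norm_bounded (sumu (by norm_num)) (Gser_term_bound (a := a) t)

lemma Hser_summable (t : ℝ) :
    Summable (fun n : ℕ => Real.cos (((n:ℝ)+1) * t) / (((n:ℝ)+1)^2 * (((n:ℝ)+1)^2 + a^2))) :=
  Summable.of_norm_bounded (sumu (by norm_num)) (Hser_term_bound (a := a) t)

lemma Tser_hasDeriv (t : ℝ) : HasDerivAt (Tser a) (Gser a t) t := by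
  have happ := hasDerivAt_tsum (u := fun n : ℕ => 1/((n:ℝ)+1)^2)
    (g := fun (n : ℕ) (u : ℝ) => Real.sin (((n:ℝ)+1) * u) / (((n:ℝ)+1) * (((n:ℝ)+1)^2 + a^2)))
    (g' := fun (n : ℕ) (u : ℝ) => Real.cos (((n:ℝ)+1) * u) / (((n:ℝ)+1)^2 + a^2))
    (y₀ := 0) (sumu (by norm_num))
    (fun n u => by
      have hc : ((n:ℝ)+1) ≠ 0 := by positivity
      have := (hasDerivAt_sinm ((n:ℝ)+1) u).div_const (((n:ℝ)+1) * (((n:ℝ)+1)^2 + a^2))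
      refine this.congr_deriv ?_
      show _ = Real.cos (((n:ℝ)+1) * u) / (((n:ℝ)+1)^2 + a^2)
      have hq : (((n:ℝ)+1)^2 + a^2) ≠ 0 := by positivity
      field_simp)
    (fun n u => Gser_term_bound u n)
    (by
      have hz : (fun n : ℕ => Real.sin (((n:ℝ)+1) * 0) / (((n:ℝ)+1) * (((n:ℝ)+1)^2 + a^2)))
          = fun _ => (0:ℝ) := by
        funext n; simp
      rw [hz]; exact summable_zero)
    t
  exact happ

lemma Hser_hasDeriv (t : ℝ) : HasDerivAt (Hser a) (-(Tser a t)) t := by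
  have happ := hasDerivAt_tsum (u := fun n : ℕ => 1/((n:ℝ)+1)^3)
    (g := fun (n : ℕ) (u : ℝ) => Real.cos (((n:ℝ)+1) * u) / (((n:ℝ)+1)^2 * (((n:ℝ)+1)^2 + a^2)))
    (g' := fun (n : ℕ) (u : ℝ) =>
      -(Real.sin (((n:ℝ)+1) * u) / (((n:ℝ)+1) * (((n:ℝ)+1)^2 + a^2))))
    (y₀ := 0) (sumu (by norm_num))
    (fun n u => by
      have hc : ((n:ℝ)+1) ≠ 0 := by positivity
      have hq : (((n:ℝ)+1)^2 + a^2) ≠ 0 := by positivity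
      have := (hasDerivAt_cosm ((n:ℝ)+1) u).div_const (((n:ℝ)+1)^2 * (((n:ℝ)+1)^2 + a^2))
      refine this.congr_deriv ?_
      show _ = -(Real.sin (((n:ℝ)+1) * u) / (((n:ℝ)+1) * (((n:ℝ)+1)^2 + a^2)))
      field_simp)
    (fun n u => by
      rw [norm_neg]
      exact Tser_term_bound u n)
    (by
      have hz : ∀ n : ℕ, Real.cos (((n:ℝ)+1) * 0) / (((n:ℝ)+1)^2 * (((n:ℝ)+1)^2 + a^2))
          = 1 / (((n:ℝ)+1)^2 * (((n:ℝ)+1)^2 + a^2)) := by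
        intro n; simp
      apply Summable.congr (f := fun n : ℕ => 1 / (((n:ℝ)+1)^2 * (((n:ℝ)+1)^2 + a^2)))
      · apply Summable.of_nonneg_of_le (fun n => by positivity)
          (fun n => ?_) (sumu (p := 2) (by norm_num))
        have hc : (0:ℝ) < (n:ℝ)+1 := by positivity
        apply div_le_div₀ zero_le_one le_rfl (by positivity)
        nlinarith [sq_nonneg a, sq_nonneg ((n:ℝ)+1), sq_nonneg (((n:ℝ)+1)^2 - 1)]
      · exact fun n => (hz n).symm)
    t
  have htn : (∑' n : ℕ, -(Real.sin (((n:ℝ)+1) * t) / (((n:ℝ)+1) * (((n:ℝ)+1)^2 + a^2))))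
      = -(Tser a t) := by
    rw [tsum_neg]; rfl
  rw [htn] at happ
  exact happ

lemma Gser_eq (t : ℝ) : Gser a t =
    (∑' n : ℕ, Real.cos (((n:ℝ)+1) * t) / ((n:ℝ)+1)^2) - a^2 * Hser a t := by
  have h1 : Summable (fun n : ℕ => Real.cos (((n:ℝ)+1) * t) / ((n:ℝ)+1)^2) := by
    apply Summable.of_norm_bounded (sumu (p := 2) (by norm_num))
    intro n
    have hc : (0:ℝ) < (n:ℝ)+1 := by positivity
    rw [Real.norm_eq_abs, abs_div, abs_of_pos (by positivity : (0:ℝ) < ((n:ℝ)+1)^2)]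
    exact div_le_div₀ zero_le_one (Real.abs_cos_le_one _) (by positivity) le_rfl
  have h2 := Hser_summable ha t
  rw [Hser, ← tsum_mul_left, Gser, ← Summable.tsum_sub h1 (h2.mul_left _)]
  apply tsum_congr
  intro n
  have hc : ((n:ℝ)+1) ≠ 0 := by positivity
  have hq : (((n:ℝ)+1)^2 + a^2) ≠ 0 := by positivity
  field_simp
  ring

lemma Gser_cont : Continuous (Gser a) := by
  apply continuous_tsum (fun i => by fun_prop) (sumu (p := 2) (by norm_num))
  exact fun n u => Gser_term_bound u n

lemma Tser_zero : Tser a 0 = 0 := by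
  have : ∀ n : ℕ, Real.sin (((n:ℝ)+1) * 0) / (((n:ℝ)+1) * (((n:ℝ)+1)^2 + a^2)) = 0 := by
    intro n; simp
  rw [Tser, tsum_congr this, tsum_zero]

lemma Tser_two_pi : Tser a (2*π) = 0 := by
  have : ∀ n : ℕ, Real.sin (((n:ℝ)+1) * (2*π)) / (((n:ℝ)+1) * (((n:ℝ)+1)^2 + a^2)) = 0 := by
    intro n
    have : Real.sin (((n:ℝ)+1) * (2*π)) = 0 := by
      have := Real.sin_nat_mul_pi (2*(n+1))
      rw [show ((2*(n+1) : ℕ) : ℝ) * π = ((n:ℝ)+1) * (2*π) by push_cast; ring] at this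
      exact this
    rw [this, zero_div]
  rw [Tser, tsum_congr this, tsum_zero]

end ser

noncomputable def phiF (a t : ℝ) : ℝ :=
  (π - t)/(2*a^2) - π/(2*a^2) * (Real.sinh (a*(π - t)) / Real.sinh (a*π))

noncomputable def phiF' (a t : ℝ) : ℝ :=
  -(1/(2*a^2)) + π/(2*a) * (Real.cosh (a*(π - t)) / Real.sinh (a*π))

lemma sub_hasDeriv (a t : ℝ) : HasDerivAt (fun u : ℝ => a * (π - u)) (-a) t := by
  have := ((hasDerivAt_id t).const_sub π).const_mul a
  refine this.congr_deriv ?_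
  ring

lemma phiF_hasDeriv {a : ℝ} (ha : 0 < a) (t : ℝ) :
    HasDerivAt (phiF a) (phiF' a t) t := by
  have hsh : Real.sinh (a*π) ≠ 0 :=
    ne_of_gt (Real.sinh_pos_iff.mpr (by positivity))
  have h1 : HasDerivAt (fun u : ℝ => (π - u)/(2*a^2)) (-(1/(2*a^2))) t := by
    have := ((hasDerivAt_id t).const_sub π).div_const (2*a^2)
    refine this.congr_deriv ?_
    ring
  have h2 : HasDerivAt (fun u : ℝ => Real.sinh (a*(π - u))) (Real.cosh (a*(π-t)) * (-a)) t :=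
    (Real.hasDerivAt_sinh _).comp t (sub_hasDeriv a t)
  have h3 := ((h2.div_const (Real.sinh (a*π))).const_mul (π/(2*a^2)))
  have h4 := h1.sub h3
  refine h4.congr_deriv ?_
  unfold phiF'
  field_simp
  ring

lemma phiF'_hasDeriv {a : ℝ} (ha : 0 < a) (t : ℝ) :
    HasDerivAt (phiF' a) (a^2 * phiF a t - (π - t)/2) t := by
  have hsh : Real.sinh (a*π) ≠ 0 :=
    ne_of_gt (Real.sinh_pos_iff.mpr (by positivity))
  have h2 : HasDerivAt (fun u : ℝ => Real.cosh (a*(π - u))) (Real.sinh (a*(π-t)) * (-a)) t :=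
    (Real.hasDerivAt_cosh _).comp t (sub_hasDeriv a t)
  have h3 := ((h2.div_const (Real.sinh (a*π))).const_mul (π/(2*a))).const_add (-(1/(2*a^2)))
  refine h3.congr_deriv ?_
  unfold phiF
  field_simp
  ring

lemma phiF_zero {a : ℝ} (ha : 0 < a) : phiF a 0 = 0 := by
  have hsh : Real.sinh (a*π) ≠ 0 :=
    ne_of_gt (Real.sinh_pos_iff.mpr (by positivity))
  unfold phiF
  rw [sub_zero]
  field_simp
  ring

lemma phiF_two_pi {a : ℝ} (ha : 0 < a) : phiF a (2*π) = 0 := by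
  have hsh : Real.sinh (a*π) ≠ 0 :=
    ne_of_gt (Real.sinh_pos_iff.mpr (by positivity))
  unfold phiF
  rw [show a * (π - 2*π) = -(a*π) by ring, Real.sinh_neg]
  field_simp
  ring

lemma Tser_eq_phiF {a : ℝ} (ha : 0 < a) {x : ℝ} (hx0 : 0 < x) (hx2 : x < 2*π) :
    Tser a x = phiF a x := by
  have hpi := Real.pi_pos
  set s : Set ℝ := Set.Ioo 0 (2*π) with hs
  have hxs : x ∈ s := ⟨hx0, hx2⟩
  set W : ℝ → ℝ := fun t => Tser a t - phiF a t with hW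
  have hWd : ∀ t, HasDerivAt W (Gser a t - phiF' a t) t :=
    fun t => (Tser_hasDeriv ha t).sub (phiF_hasDeriv ha t)
  have hWcont : Continuous W :=
    continuous_iff_continuousAt.2 fun t => (hWd t).continuousAt
  have hW0 : W 0 = 0 := by rw [hW]; simp [Tser_zero ha, phiF_zero ha]
  have hW2 : W (2*π) = 0 := by rw [hW]; simp [Tser_two_pi ha, phiF_two_pi ha]
  -- derivative of Gser on s
  have hGd : ∀ t ∈ s, HasDerivAt (Gser a) (t/2 - π/2 + a^2 * Tser a t) t := by
    intro t ht
    have hfun : Gser a = fun u =>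
        (∑' n : ℕ, Real.cos (((n:ℝ)+1) * u) / ((n:ℝ)+1)^2) - a^2 * Hser a u :=
      funext fun u => Gser_eq ha u
    rw [hfun]
    have h1 : HasDerivAt (fun _ : ℝ => π^2/6) 0 t := hasDerivAt_const t _
    have h2 : HasDerivAt (fun u : ℝ => π*u/2) (π/2) t := by
      simpa using ((hasDerivAt_id t).const_mul π).div_const 2
    have h3 : HasDerivAt (fun u : ℝ => u^2/4) (t/2) t := by
      have := (hasDerivAt_pow 2 t).div_const 4
      refine this.congr_deriv ?_
      ring
    have hpoly : HasDerivAt (fun u : ℝ => π^2/6 - π*u/2 + u^2/4) (t/2 - π/2) t := by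
      have := (h1.sub h2).add h3
      refine this.congr_deriv ?_
      ring
    have hC2d : HasDerivAt (fun u => ∑' n : ℕ, Real.cos (((n:ℝ)+1) * u) / ((n:ℝ)+1)^2)
        (t/2 - π/2) t := by
      apply hpoly.congr_of_eventuallyEq
      filter_upwards [isOpen_Ioo.mem_nhds ht] with u hu
      exact C2_eval (le_of_lt hu.1) (le_of_lt hu.2)
    have hHd := Hser_hasDeriv ha t
    have := hC2d.sub (hHd.const_mul (a^2))
    refine this.congr_deriv ?_
    ring
  -- the two first order quantities
  set u1 : ℝ → ℝ := fun t => (Gser a t - phiF' a t + a * W t) * Real.exp (-(a*t)) with hu1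
  set u2 : ℝ → ℝ := fun t => (Gser a t - phiF' a t - a * W t) * Real.exp (a*t) with hu2
  have hE1 : ∀ t, HasDerivAt (fun u : ℝ => Real.exp (-(a*u))) (Real.exp (-(a*t)) * (-a)) t := by
    intro t
    have hinner : HasDerivAt (fun u : ℝ => -(a*u)) (-a) t := by
      exact ((hasDerivAt_id t).const_mul a).neg.congr_deriv (by ring)
    exact (Real.hasDerivAt_exp _).comp t hinner
  have hE2 : ∀ t, HasDerivAt (fun u : ℝ => Real.exp (a*u)) (Real.exp (a*t) * a) t := by
    intro t
    have hinner : HasDerivAt (fun u : ℝ => a*u) a t := by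
      simpa using (hasDerivAt_id t).const_mul a
    exact (Real.hasDerivAt_exp _).comp t hinner
  have hu1d : ∀ t ∈ s, HasDerivAt u1 0 t := by
    intro t ht
    have hA : HasDerivAt (fun u => Gser a u - phiF' a u + a * W u)
        ((t/2 - π/2 + a^2 * Tser a t) - (a^2 * phiF a t - (π - t)/2)
          + a * (Gser a t - phiF' a t)) t :=
      ((hGd t ht).sub (phiF'_hasDeriv ha t)).add ((hWd t).const_mul a)
    have := hA.mul (hE1 t)
    refine this.congr_deriv ?_
    rw [hW]
    ring
  have hu2d : ∀ t ∈ s, HasDerivAt u2 0 t := by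
    intro t ht
    have hA : HasDerivAt (fun u => Gser a u - phiF' a u - a * W u)
        ((t/2 - π/2 + a^2 * Tser a t) - (a^2 * phiF a t - (π - t)/2)
          - a * (Gser a t - phiF' a t)) t :=
      ((hGd t ht).sub (phiF'_hasDeriv ha t)).sub ((hWd t).const_mul a)
    have := hA.mul (hE2 t)
    refine this.congr_deriv ?_
    rw [hW]
    ring
  have hphi'cont : Continuous (phiF' a) := by
    unfold phiF'
    fun_prop
  have hu1cont : Continuous u1 := by
    rw [hu1]
    exact (((Gser_cont ha).sub hphi'cont).add (continuous_const.mul hWcont)).mul (by fun_prop)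
  have hu2cont : Continuous u2 := by
    rw [hu2]
    exact (((Gser_cont ha).sub hphi'cont).sub (continuous_const.mul hWcont)).mul (by fun_prop)
  -- constancy on s
  have hconst : ∀ (v : ℝ → ℝ), (∀ t ∈ s, HasDerivAt v 0 t) → ∀ t ∈ s, v t = v x := by
    intro v hv t ht
    apply Convex.is_const_of_fderivWithin_eq_zero (𝕜 := ℝ) (convex_Ioo 0 (2*π)) ?_ ?_ ht hxs
    · intro u hu
      exact ((hv u hu).differentiableAt).differentiableWithinAt
    · intro u hu
      rw [((hv u hu).hasFDerivAt.hasFDerivWithinAt).fderivWithin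
        (isOpen_Ioo.uniqueDiffWithinAt hu)]
      ext v'
      simp
  -- boundary values
  have hbdry : ∀ (v : ℝ → ℝ), Continuous v → (∀ t ∈ s, v t = v x) →
      v 0 = v x ∧ v (2*π) = v x := by
    intro v hv hc
    have hgen : ∀ b : ℝ, b ∈ closure s → v b = v x := by
      intro b hb
      haveI hne : (nhdsWithin b s).NeBot := mem_closure_iff_nhdsWithin_neBot.mp hb
      have h1 : Tendsto v (nhdsWithin b s) (nhds (v b)) := (hv.continuousAt).continuousWithinAt
      have h2 : Tendsto v (nhdsWithin b s) (nhds (v x)) := by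
        apply Tendsto.congr' _ tendsto_const_nhds
        filter_upwards [self_mem_nhdsWithin] with u hu
        exact (hc u hu).symm
      exact tendsto_nhds_unique h1 h2
    have hcl : closure s = Set.Icc 0 (2*π) := by
      rw [hs]
      exact closure_Ioo (by positivity)
    constructor
    · exact hgen 0 (by rw [hcl]; exact ⟨le_refl 0, by positivity⟩)
    · exact hgen (2*π) (by rw [hcl]; exact ⟨by positivity, le_refl _⟩)
  obtain ⟨h10, h12⟩ := hbdry u1 hu1cont (hconst u1 hu1d)
  obtain ⟨h20, h22⟩ := hbdry u2 hu2cont (hconst u2 hu2d)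
  have v10 : u1 0 = Gser a 0 - phiF' a 0 := by rw [hu1]; simp [hW0]
  have v20 : u2 0 = Gser a 0 - phiF' a 0 := by rw [hu2]; simp [hW0]
  have v12 : u1 (2*π) = (Gser a (2*π) - phiF' a (2*π)) * Real.exp (-(a*(2*π))) := by
    rw [hu1]; simp [hW2]
  have v22 : u2 (2*π) = (Gser a (2*π) - phiF' a (2*π)) * Real.exp (a*(2*π)) := by
    rw [hu2]; simp [hW2]
  have key1 : Gser a 0 - phiF' a 0
      = (Gser a (2*π) - phiF' a (2*π)) * Real.exp (-(a*(2*π))) := by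
    rw [← v10, ← v12, h10, h12]
  have key2 : Gser a 0 - phiF' a 0
      = (Gser a (2*π) - phiF' a (2*π)) * Real.exp (a*(2*π)) := by
    rw [← v20, ← v22, h20, h22]
  have hlt : Real.exp (-(a*(2*π))) < Real.exp (a*(2*π)) := by
    apply Real.exp_lt_exp.mpr
    nlinarith
  have hPzero : Gser a (2*π) - phiF' a (2*π) = 0 := by
    rcases lt_trichotomy (Gser a (2*π) - phiF' a (2*π)) 0 with h | h | h
    · nlinarith
    · exact h
    · nlinarith
  have hQzero : Gser a 0 - phiF' a 0 = 0 := by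
    rw [key1, hPzero, zero_mul]
  have hu1x : u1 x = 0 := by rw [← h10, v10, hQzero]
  have hu2x : u2 x = 0 := by rw [← h20, v20, hQzero]
  rw [hu1] at hu1x
  rw [hu2] at hu2x
  simp only [] at hu1x hu2x
  have he1 : Real.exp (-(a*x)) ≠ 0 := Real.exp_ne_zero _
  have he2 : Real.exp (a*x) ≠ 0 := Real.exp_ne_zero _
  have f1 : Gser a x - phiF' a x + a * W x = 0 := by
    rcases mul_eq_zero.mp hu1x with h | h
    · exact h
    · exact absurd h he1
  have f2 : Gser a x - phiF' a x - a * W x = 0 := by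
    rcases mul_eq_zero.mp hu2x with h | h
    · exact h
    · exact absurd h he2
  have hWx : W x = 0 := by
    have haW : a * W x = 0 := by linarith
    rcases mul_eq_zero.mp haW with h | h
    · exact absurd h (ne_of_gt ha)
    · exact h
  rw [hW] at hWx
  have : Tser a x - phiF a x = 0 := hWx
  linarith

lemma sawtooth_aux {x : ℝ} (hx0 : 0 < x) (hx2 : x < 2 * π) :
    Tendsto (fun N : ℕ => ∑ n ∈ Finset.range N, Real.sin (n * x) / n) atTop
      (nhds ((π - x) / 2)) := by
  have hpi := Real.pi_pos
  set z : ℂ := Complex.exp (x * Complex.I) with hz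
  have hcos : Real.cos x ≠ 1 := by
    intro h
    rcases (cos_eq_one_iff_of_lt_of_lt (by linarith) hx2).mp h with rfl
    exact lt_irrefl _ hx0
  have hz1 : z ≠ 1 := by
    intro h
    apply hcos
    have := congrArg Complex.re h
    rwa [Complex.exp_ofReal_mul_I_re] at this
  have hzn : ‖z‖ = 1 := by
    simp [hz, Complex.norm_exp_ofReal_mul_I]
  have hsinpos : 0 < Real.sin (x / 2) :=
    Real.sin_pos_of_pos_of_lt_pi (by linarith) (by linarith)
  have e1 : Real.cos x = 1 - 2 * Real.sin (x/2) ^ 2 := by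
    have h := Real.cos_two_mul (x/2)
    rw [show 2 * (x/2) = x by ring] at h
    nlinarith [Real.sin_sq_add_cos_sq (x/2)]
  have e2 : Real.sin x = 2 * Real.sin (x/2) * Real.cos (x/2) := by
    have h := Real.sin_two_mul (x/2)
    rw [show 2 * (x/2) = x by ring] at h
    linarith
  -- key factorization
  have key : (1 : ℂ) - z = (2 * Real.sin (x / 2) : ℝ) *
      (Complex.cos (x / 2 - π / 2 : ℝ) + Complex.sin (x / 2 - π / 2 : ℝ) * Complex.I) := by
    rw [hz, Complex.exp_mul_I]
    rw [(Complex.ofReal_cos x).symm, (Complex.ofReal_sin x).symm,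
      (Complex.ofReal_cos _).symm, (Complex.ofReal_sin _).symm]
    rw [Real.cos_sub_pi_div_two, Real.sin_sub_pi_div_two]
    rw [e1, e2]
    push_cast
    ring
  have harg : (1 - z).arg = x / 2 - π / 2 := by
    rw [key, Complex.arg_real_mul _ (by positivity), Complex.arg_cos_add_sin_mul_I]
    constructor <;> simp <;> linarith
  have hre : (0:ℝ) < (1 - z).re := by
    have h : (1 - z).re = 1 - Real.cos x := by
      simp [hz, Complex.sub_re, Complex.exp_ofReal_mul_I_re]
    rw [h]
    rcases lt_or_eq_of_le (Real.cos_le_one x) with h' | h'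
    · linarith
    · exact absurd h' hcos
  -- partial sums of z^n/n converge
  set f : ℕ → ℂ := fun n => z ^ n / n with hf
  have hbdd : ∀ n : ℕ, ‖∑ i ∈ Finset.range n, z ^ (i + 1)‖ ≤ 2 / ‖1 - z‖ := by
    intro n
    have hsum : ∑ i ∈ Finset.range n, z ^ (i + 1) = z * ((z ^ n - 1) / (z - 1)) := by
      rw [← geom_sum_eq hz1 n, Finset.mul_sum]
      exact Finset.sum_congr rfl fun i _ => by ring
    have h0 : (0:ℝ) < ‖1 - z‖ := by
      rw [norm_pos_iff, sub_ne_zero]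
      exact fun h => hz1 h.symm
    rw [hsum, norm_mul, hzn, one_mul, norm_div, show z - 1 = -(1-z) by ring, norm_neg,
      div_le_div_iff₀ h0 h0]
    have h2 : ‖z ^ n - 1‖ ≤ 2 := by
      calc ‖z ^ n - 1‖ ≤ ‖z ^ n‖ + ‖(1:ℂ)‖ := norm_sub_le _ _
      _ ≤ 2 := by rw [norm_pow, hzn]; norm_num
    nlinarith
  have hcauchy : CauchySeq fun n => ∑ i ∈ Finset.range n, (1 / ((i:ℝ) + 1)) • z ^ (i + 1) := by
    apply Antitone.cauchySeq_series_mul_of_tendsto_zero_of_bounded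
    · intro m n hmn
      have h : ((m:ℝ)+1) ≤ ((n:ℝ)+1) := by exact_mod_cast by omega
      exact one_div_le_one_div_of_le (by positivity) h
    · exact tendsto_one_div_add_atTop_nhds_zero_nat
    · exact hbdd
  obtain ⟨L, hL⟩ := cauchySeq_tendsto_of_complete hcauchy
  have hLf : Tendsto (fun n => ∑ i ∈ Finset.range n, f i) atTop (nhds L) := by
    have heq : ∀ n : ℕ, ∑ i ∈ Finset.range (n + 1), f i
        = ∑ i ∈ Finset.range n, (1 / ((i:ℝ) + 1)) • z ^ (i + 1) := by
      intro n
      rw [Finset.sum_range_succ']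
      have h00 : f 0 = 0 := by simp [hf]
      rw [h00, add_zero]
      refine Finset.sum_congr rfl fun i _ => ?_
      simp only [hf]
      rw [Complex.real_smul]
      push_cast
      rw [div_mul_eq_mul_div, one_mul]
    rw [← tendsto_add_atTop_iff_nat 1]
    simpa only [heq] using hL
  -- Abel limit
  have habel := Complex.tendsto_tsum_powerSeries_nhdsWithin_lt hLf
  have hlog : Tendsto (fun w : ℂ => -Complex.log (1 - z * w))
      ((nhdsWithin (1:ℝ) (Set.Iio 1)).map Complex.ofReal) (nhds (-Complex.log (1 - z))) := by
    have hc : Tendsto (fun w : ℂ => -Complex.log (1 - z * w)) (nhds 1)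
        (nhds (-Complex.log (1 - z))) := by
      have h1 : (1:ℂ) - z * 1 ∈ Complex.slitPlane := by rw [mul_one]; exact Or.inl hre
      have h2 : Tendsto (fun w : ℂ => 1 - z * w) (nhds 1) (nhds (1 - z)) := by
        have hcont : Continuous (fun w : ℂ => 1 - z * w) := by fun_prop
        simpa using hcont.tendsto 1
      have h1' : (1:ℂ) - z ∈ Complex.slitPlane := Or.inl hre
      exact ((continuousAt_clog h1').tendsto.comp h2).neg
    refine hc.mono_left ?_
    calc Filter.map Complex.ofReal (nhdsWithin 1 (Set.Iio 1))
        ≤ Filter.map Complex.ofReal (nhds 1) := Filter.map_mono nhdsWithin_le_nhds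
      _ ≤ nhds 1 := by
          have := Complex.continuous_ofReal.tendsto 1
          rwa [Filter.Tendsto, Complex.ofReal_one] at this
  have heqev : ∀ᶠ w in (nhdsWithin (1:ℝ) (Set.Iio 1)).map Complex.ofReal,
      (∑' n, f n * w ^ n) = -Complex.log (1 - z * w) := by
    rw [Filter.eventually_map]
    have h1 : ∀ᶠ r in nhdsWithin (1:ℝ) (Set.Iio 1), r ∈ Set.Ioo (0:ℝ) 1 := by
      filter_upwards [self_mem_nhdsWithin,
        eventually_nhdsWithin_of_eventually_nhds (eventually_gt_nhds one_pos)] with r h1 h2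
      exact ⟨h2, h1⟩
    filter_upwards [h1] with r hr
    have hnorm : ‖z * (r:ℂ)‖ < 1 := by
      rw [norm_mul, hzn, one_mul, Complex.norm_real, Real.norm_eq_abs, abs_of_pos hr.1]
      exact hr.2
    have hs := Complex.hasSum_taylorSeries_log (z := -(z * r)) (by rwa [norm_neg])
    have hneg := hs.neg
    rw [show (1 : ℂ) + -(z * (r:ℂ)) = 1 - z * r by ring] at hneg
    have hfun : (fun n : ℕ => -((-1:ℂ) ^ (n + 1) * (-(z * (r:ℂ))) ^ n / n))
        = fun n : ℕ => z ^ n * (r:ℂ) ^ n / n := by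
      funext n
      rw [neg_pow (z * (r:ℂ)) n, mul_pow]
      have h1 : ((-1:ℂ))^(n+1) * ((-1:ℂ))^n = -1 := by
        rw [← pow_add, show n+1+n = 2*n+1 by ring, pow_succ, pow_mul]
        norm_num
      linear_combination (-(z^n * (r:ℂ)^n)/n) * h1
    rw [hfun] at hneg
    calc ∑' n, f n * (r:ℂ) ^ n = ∑' n : ℕ, z ^ n * (r:ℂ) ^ n / (n:ℂ) :=
          tsum_congr fun n => by simp only [hf]; ring
      _ = -Complex.log (1 - z * r) := hneg.tsum_eq
  have hne : ((nhdsWithin (1:ℝ) (Set.Iio 1)).map Complex.ofReal).NeBot := Filter.map_neBot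
  have hLeq : L = -Complex.log (1 - z) :=
    tendsto_nhds_unique habel (hlog.congr' (by filter_upwards [heqev] with w hw using hw.symm))
  -- take imaginary parts
  have him : Tendsto (fun n => (∑ i ∈ Finset.range n, f i).im) atTop (nhds L.im) :=
    (Complex.continuous_im.tendsto L).comp hLf
  rw [hLeq] at him
  have hval : (-Complex.log (1 - z)).im = (π - x) / 2 := by
    rw [Complex.neg_im, Complex.log_im, harg]; ring
  rw [hval] at him
  refine him.congr fun N => ?_
  rw [Complex.im_sum]
  refine Finset.sum_congr rfl fun n _ => ?_
  simp only [hf]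
  rw [← Complex.exp_nat_mul]
  rw [show (n:ℂ) * ((x:ℂ) * Complex.I) = (((n:ℝ) * x : ℝ) : ℂ) * Complex.I by push_cast; ring]
  rw [Complex.div_natCast_im, Complex.exp_ofReal_mul_I_im]

theorem cutoff_sin_series_identity (ψ : ℝ → ℝ) (hψ : ∀ x : ℝ, 2 ≤ |x| → ψ x = 0)
    (μ : ℝ) (hμ : 0 < μ) (y : ℝ) (hy0 : 0 < y) (hy1 : y < 1) :
    Tendsto (fun N : ℕ => ∑ n ∈ Finset.Icc 1 N,
        (n : ℝ) * Real.sin (n * π * y) * (1 - ψ ((n : ℝ) ^ 2 + μ)) / ((n : ℝ) ^ 2 + μ)) atTop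
      (nhds ((π / 2) * Real.sinh (π * Real.sqrt μ * (1 - y)) / Real.sinh (π * Real.sqrt μ)
        - Real.sin (π * y) * ψ (1 + μ) / (1 + μ))) := by
  have hpi := Real.pi_pos
  set a := Real.sqrt μ with hadef
  have ha : 0 < a := Real.sqrt_pos.mpr hμ
  have ha2 : a^2 = μ := Real.sq_sqrt hμ.le
  set x := π * y with hxdef
  have hx0 : 0 < x := mul_pos hpi hy0
  have hx2 : x < 2*π := by rw [hxdef]; nlinarith
  have hμ1 : (0:ℝ) < 1 + μ := by linarith
  set K := Real.sin (π*y) * ψ (1+μ) / (1+μ) with hK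
  -- limit A : sawtooth over Icc
  have hA : Tendsto (fun N : ℕ => ∑ n ∈ Finset.Icc 1 N, Real.sin ((n:ℝ) * x) / n) atTop
      (nhds ((π - x)/2)) := by
    have hsaw := sawtooth_aux hx0 hx2
    have hcomp : Tendsto (fun N : ℕ => ∑ n ∈ Finset.range (N+1), Real.sin ((n:ℝ)*x)/n) atTop
        (nhds ((π - x)/2)) := by
      exact (tendsto_add_atTop_iff_nat
        (f := fun N : ℕ => ∑ n ∈ Finset.range N, Real.sin ((n:ℝ)*x)/n) 1).mpr hsaw
    refine hcomp.congr fun N => ?_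
    rw [Finset.sum_range_succ', ← Finset.Ico_add_one_right_eq_Icc, Finset.sum_Ico_eq_sum_range]
    simp only [Nat.add_sub_cancel, Nat.cast_zero, zero_mul, Real.sin_zero, zero_div, add_zero]
    exact Finset.sum_congr rfl fun i _ => by rw [add_comm i 1]
  -- limit B : T series over Icc
  have hB : Tendsto (fun N : ℕ => ∑ n ∈ Finset.Icc 1 N,
      Real.sin ((n:ℝ)*x) / ((n:ℝ)*((n:ℝ)^2 + a^2))) atTop (nhds (Tser a x)) := by
    have h1 := (Tser_summable ha x).hasSum.tendsto_sum_nat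
    refine h1.congr fun N => ?_
    rw [← Finset.Ico_add_one_right_eq_Icc, Finset.sum_Ico_eq_sum_range,
      show N + 1 - 1 = N from rfl]
    exact Finset.sum_congr rfl fun i _ => by push_cast; ring_nf
  -- combined limit for the pure series
  have hS : Tendsto (fun N : ℕ => ∑ n ∈ Finset.Icc 1 N,
      (n:ℝ) * Real.sin ((n:ℝ)*x) / ((n:ℝ)^2 + μ)) atTop
      (nhds ((π - x)/2 - a^2 * Tser a x)) := by
    have h := hA.sub (hB.const_mul (a^2))
    refine h.congr fun N => ?_
    rw [Finset.mul_sum, ← Finset.sum_sub_distrib]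
    refine Finset.sum_congr rfl fun n hn => ?_
    have hn1 : 1 ≤ n := (Finset.mem_Icc.mp hn).1
    have hnpos : (0:ℝ) < (n:ℝ) := by exact_mod_cast Nat.pos_of_ne_zero (by omega)
    have hnne : ((n:ℝ)) ≠ 0 := ne_of_gt hnpos
    have hq : ((n:ℝ)^2 + μ) ≠ 0 := by positivity
    rw [← ha2] at hq ⊢
    field_simp
    ring
  -- ψ correction
  have hKeq : ∀ N : ℕ, 1 ≤ N →
      (∑ n ∈ Finset.Icc 1 N, (n:ℝ) * Real.sin ((n:ℝ)*π*y) * (1 - ψ ((n:ℝ)^2 + μ)) / ((n:ℝ)^2 + μ))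
      = (∑ n ∈ Finset.Icc 1 N, (n:ℝ) * Real.sin ((n:ℝ)*x) / ((n:ℝ)^2 + μ)) - K := by
    intro N hN
    have hterm : ∀ n ∈ Finset.Icc 1 N,
        (n:ℝ) * Real.sin ((n:ℝ)*π*y) * (1 - ψ ((n:ℝ)^2+μ)) / ((n:ℝ)^2+μ)
        = (n:ℝ) * Real.sin ((n:ℝ)*x)/((n:ℝ)^2+μ) - (if n = 1 then K else 0) := by
      intro n hn
      have hn1 : 1 ≤ n := (Finset.mem_Icc.mp hn).1
      by_cases h1 : n = 1
      · subst h1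
        rw [if_pos rfl, hK, hxdef]
        push_cast
        rw [show (1:ℝ) * π * y = π * y by ring, show (1:ℝ) * (π * y) = π * y by ring,
          one_pow]
        field_simp
      · have h2 : 2 ≤ n := by omega
        have hn2 : (2:ℝ) ≤ (n:ℝ) := by exact_mod_cast h2
        have hψ0 : ψ ((n:ℝ)^2 + μ) = 0 := by
          apply hψ
          rw [abs_of_pos (by positivity)]
          nlinarith
        rw [hψ0, if_neg h1, sub_zero, sub_zero, mul_one, hxdef, mul_assoc]
    rw [Finset.sum_congr rfl hterm, Finset.sum_sub_distrib]
    congr 1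
    rw [Finset.sum_ite_eq' (Finset.Icc 1 N) 1 (fun _ => K)]
    rw [if_pos (Finset.mem_Icc.mpr ⟨le_refl 1, hN⟩)]
  -- final value identity
  have hsh : Real.sinh (a*π) ≠ 0 := ne_of_gt (Real.sinh_pos_iff.mpr (by positivity))
  have hveq : ((π - x)/2 - a^2 * Tser a x) - K
      = (π / 2) * Real.sinh (π * a * (1 - y)) / Real.sinh (π * a) - K := by
    rw [Tser_eq_phiF ha hx0 hx2]
    unfold phiF
    rw [show a * (π - x) = π * a * (1 - y) by rw [hxdef]; ring,
      show a * π = π * a by ring]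
    have hsh' : Real.sinh (π*a) ≠ 0 := by rwa [mul_comm]
    field_simp
    ring
  have hlim := hS.sub_const K
  rw [hveq] at hlim
  refine hlim.congr' ?_
  filter_upwards [eventually_ge_atTop 1] with N hN
  exact (hKeq N hN).symm
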